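/- In the multiple-choice knapsack LP relaxation, if two items j, h in the same class D_k satisfy |s_{k,j}| ≤ |s_{k,h}| and u_{k,j}/|s_{k,j}| ≥ u_{k,h}/|s_{k,h}| and u_{k,j} ≥ u_{k,h}, then there exists an optimal integral solution (to the binary problem with sum-of-magnitudes constraint) with x_{k,h} = 0. -/
import Mathlib


theorem dominated_item_removal (n N : ℕ) (user : Fin N → Fin n)
    (u w : Fin N → ℝ) (C : ℝ)
    (hu : ∀ i, 0 < u i) (hw : ∀ i, 0 < w i) (hC : 0 ≤ C)
    (j h : Fin N) (hjh : j ≠ h) (huser : user j = user h)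
    (hwle : w j ≤ w h) (hratio : u h / w h ≤ u j / w j) (hule : u h ≤ u j) :
    ∃ S : Finset (Fin N),
      (∑ i ∈ S, w i ≤ C) ∧
      (∀ k, (S.filter (fun i => user i = k)).card ≤ 1) ∧
      h ∉ S ∧
      (∀ S' : Finset (Fin N), (∑ i ∈ S', w i ≤ C) →
        (∀ k, (S'.filter (fun i => user i = k)).card ≤ 1) →
        ∑ i ∈ S', u i ≤ ∑ i ∈ S, u i) := by
  classical
  set T : Finset (Finset (Fin N)) :=
    Finset.univ.filter (fun S => (∑ i ∈ S, w i ≤ C) ∧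
      (∀ k, (S.filter (fun i => user i = k)).card ≤ 1) ∧ h ∉ S) with hT
  have hempty : (∅ : Finset (Fin N)) ∈ T := by
    simp [hT, hC]
  obtain ⟨S, hS, hmax⟩ := T.exists_max_image (fun S => ∑ i ∈ S, u i) ⟨∅, hempty⟩
  rw [hT, Finset.mem_filter] at hS
  obtain ⟨-, hSw, hScard, hSh⟩ := hS
  refine ⟨S, hSw, hScard, hSh, ?_⟩
  intro S' hw' hcard'
  by_cases hh : h ∈ S'
  · -- swap h for j
    have hjS' : j ∉ S'.erase h := by
      intro hj
      have hj' : j ∈ S' := Finset.mem_of_mem_erase hj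
      have hsub : ({j, h} : Finset (Fin N)) ⊆ S'.filter (fun i => user i = user j) := by
        intro x hx
        rcases Finset.mem_insert.1 hx with rfl | hx
        · exact Finset.mem_filter.2 ⟨hj', rfl⟩
        · rw [Finset.mem_singleton] at hx
          subst hx
          exact Finset.mem_filter.2 ⟨hh, huser.symm⟩
      have := Finset.card_le_card hsub
      rw [Finset.card_pair hjh] at this
      have := hcard' (user j)
      omega
    set S'' : Finset (Fin N) := insert j (S'.erase h) with hS''
    have hsume : ∀ f : Fin N → ℝ, ∑ i ∈ S'', f i = f j + (∑ i ∈ S', f i - f h) := by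
      intro f
      rw [hS'', Finset.sum_insert hjS', Finset.sum_erase_eq_sub hh]
    have hwS'' : ∑ i ∈ S'', w i ≤ C := by
      rw [hsume w]; linarith
    have hcardS'' : ∀ k, (S''.filter (fun i => user i = k)).card ≤ 1 := by
      intro k
      by_cases hk : user j = k
      · have : S''.filter (fun i => user i = k)
            = insert j ((S'.filter (fun i => user i = k)).erase h) := by
          rw [hS'', Finset.filter_insert, if_pos hk, Finset.filter_erase]
        rw [this]
        have hhf : h ∈ S'.filter (fun i => user i = k) :=
          Finset.mem_filter.2 ⟨hh, by rw [← huser]; exact hk⟩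
        have h1 := Finset.card_erase_of_mem hhf
        have h2 := hcard' k
        calc (insert j ((S'.filter (fun i => user i = k)).erase h)).card
            ≤ ((S'.filter (fun i => user i = k)).erase h).card + 1 :=
              Finset.card_insert_le _ _
          _ ≤ 1 := by omega
      · have : S''.filter (fun i => user i = k)
            = (S'.erase h).filter (fun i => user i = k) := by
          rw [hS'', Finset.filter_insert, if_neg hk]
        rw [this]
        calc ((S'.erase h).filter (fun i => user i = k)).card
            ≤ (S'.filter (fun i => user i = k)).card :=
              Finset.card_le_card (Finset.filter_subset_filter _ (Finset.erase_subset _ _))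
          _ ≤ 1 := hcard' k
    have hhS'' : h ∉ S'' := by
      rw [hS'', Finset.mem_insert]
      push_neg
      exact ⟨fun e => hjh e.symm, Finset.notMem_erase _ _⟩
    have hmem : S'' ∈ T := by
      rw [hT, Finset.mem_filter]
      exact ⟨Finset.mem_univ _, hwS'', hcardS'', hhS''⟩
    have h1 : ∑ i ∈ S', u i ≤ ∑ i ∈ S'', u i := by
      rw [hsume u]; linarith
    exact h1.trans (hmax S'' hmem)
  · exact hmax S' (by rw [hT, Finset.mem_filter]; exact ⟨Finset.mem_univ _, hw', hcard', hh⟩)
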